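/- For the PPR LocalGD process with active sets S_t = {u : r^{(t)}_u ≥ εα d_u}, the total volume Σ_{t=0}^{T-1} vol(S_t) is at most 1/(εα), where vol(S) = Σ_{u∈S} d_u, starting from r^{(0)} = α e_s. -/
import Mathlib


open Matrix

/-- Sublinear total volume of the PPR LocalGD process: with active sets
`S_t = {u : r^{(t)}_u ≥ εα d_u}`, iteration `r^{(t+1)} = r^{(t)} - Q r_{S_t}^{(t)}`
with `Q = I - (1-α) A D⁻¹`, starting from `r^{(0)} = α e_s`, the total volume
`Σ_{t<T} vol(S_t)` is at most `1/(εα)`. -/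
theorem ppr_localGD_volume_bound (n : ℕ) (G : SimpleGraph (Fin n)) [DecidableRel G.Adj]
    (hdeg : ∀ v, 0 < G.degree v) (α ε : ℝ) (hα : 0 < α) (hα1 : α < 1)
    (hε : 0 < ε) (hε1 : ε < 1) (s : Fin n)
    (e : Fin n → Fin n → ℝ) (he : ∀ i, e i = Pi.single i 1)
    (Q : Matrix (Fin n) (Fin n) ℝ)
    (hQ : Q = 1 - (1 - α) •
      (G.adjMatrix ℝ * (Matrix.diagonal fun v => (G.degree v : ℝ))⁻¹))
    (r : ℕ → Fin n → ℝ) (hr0 : r 0 = α • e s)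
    (S : ℕ → Finset (Fin n))
    (hS : ∀ t, S t = Finset.univ.filter (fun u => ε * α * (G.degree u : ℝ) ≤ r t u))
    (hrec : ∀ t, r (t + 1) =
      r t - Q *ᵥ (fun i => if i ∈ S t then r t i else 0))
    (T : ℕ) :
    ∑ t ∈ Finset.range T, ∑ u ∈ S t, (G.degree u : ℝ) ≤ 1 / (ε * α) := by
  have hεα : 0 < ε * α := mul_pos hε hα
  have hdegR : ∀ v : Fin n, (0:ℝ) < (G.degree v : ℝ) := fun v => by exact_mod_cast hdeg v
  set x : ℕ → Fin n → ℝ := fun t i => if i ∈ S t then r t i else 0 with hxdef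
  -- inverse of the degree diagonal matrix
  have hDinv : (Matrix.diagonal fun v : Fin n => (G.degree v : ℝ))⁻¹
      = Matrix.diagonal fun v : Fin n => ((G.degree v : ℝ))⁻¹ := by
    apply Matrix.inv_eq_right_inv
    rw [Matrix.diagonal_mul_diagonal]
    have : (fun v : Fin n => (G.degree v : ℝ) * ((G.degree v : ℝ))⁻¹) = fun _ => (1:ℝ) := by
      funext v; exact mul_inv_cancel₀ (hdegR v).ne'
    rw [this, Matrix.diagonal_one]
  -- pointwise recurrence
  have hstep : ∀ t u, r (t+1) u
      = r t u - x t u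
        + (1 - α) * ∑ v, (G.adjMatrix ℝ) u v * (((G.degree v : ℝ))⁻¹ * x t v) := by
    intro t u
    have h := congrFun (hrec t) u
    rw [hQ] at h
    have hm : ((G.adjMatrix ℝ * Matrix.diagonal fun v : Fin n => ((G.degree v : ℝ))⁻¹) *ᵥ x t) u
        = ∑ v, (G.adjMatrix ℝ) u v * (((G.degree v : ℝ))⁻¹ * x t v) := by
      rw [← Matrix.mulVec_mulVec]
      simp [Matrix.mulVec, dotProduct, Matrix.diagonal, Finset.sum_ite_eq,
        mul_comm, mul_assoc]
    rw [h, Matrix.sub_mulVec, Matrix.one_mulVec, Matrix.smul_mulVec, hDinv]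
    simp only [Pi.sub_apply, Pi.smul_apply, smul_eq_mul]
    rw [hm]; ring
  -- column sums of the adjacency matrix
  have hcol : ∀ v : Fin n, ∑ u, (G.adjMatrix ℝ) u v = (G.degree v : ℝ) := by
    intro v
    have : ∀ u, (G.adjMatrix ℝ) u v = if G.Adj v u then (1:ℝ) else 0 := by
      intro u; simp [SimpleGraph.adjMatrix_apply, G.adj_comm]
    rw [Finset.sum_congr rfl fun u _ => this u]
    simp [Finset.sum_boole, SimpleGraph.degree, SimpleGraph.neighborFinset_eq_filter]
  -- nonnegativity of residuals
  have hnonneg : ∀ t u, 0 ≤ r t u := by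
    intro t
    induction t with
    | zero =>
      intro u
      rw [hr0, he]
      simp only [Pi.smul_apply, smul_eq_mul, Pi.single_apply]
      split_ifs <;> simp [hα.le]
    | succ t ih =>
      intro u
      have hxnn : ∀ v, 0 ≤ x t v := by
        intro v; by_cases h : v ∈ S t <;> simp [hxdef, h, ih v]
      have hxle : x t u ≤ r t u := by
        by_cases h : u ∈ S t <;> simp [hxdef, h, ih u]
      have hsum_nn : 0 ≤ ∑ v, (G.adjMatrix ℝ) u v * (((G.degree v : ℝ))⁻¹ * x t v) := by
        refine Finset.sum_nonneg fun v _ => mul_nonneg ?_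
          (mul_nonneg (inv_nonneg.2 (hdegR v).le) (hxnn v))
        rw [SimpleGraph.adjMatrix_apply]
        split_ifs <;> norm_num
      rw [hstep t u]
      have h1 : (0:ℝ) ≤ (1 - α) * ∑ v, (G.adjMatrix ℝ) u v * (((G.degree v : ℝ))⁻¹ * x t v) :=
        mul_nonneg (by linarith) hsum_nn
      linarith
  -- ℓ1 decrease
  have hxsum : ∀ t, ∑ u, x t u = ∑ u ∈ S t, r t u := by
    intro t
    rw [hxdef]
    simp [Finset.sum_ite_mem]
  have hsum : ∀ t, ∑ u, r (t+1) u = ∑ u, r t u - α * ∑ u ∈ S t, r t u := by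
    intro t
    rw [Finset.sum_congr rfl fun u _ => hstep t u]
    rw [Finset.sum_add_distrib, Finset.sum_sub_distrib, ← Finset.mul_sum]
    have hswap : ∑ u, ∑ v, (G.adjMatrix ℝ) u v * (((G.degree v : ℝ))⁻¹ * x t v)
        = ∑ v, x t v := by
      rw [Finset.sum_comm]
      refine Finset.sum_congr rfl fun v _ => ?_
      rw [← Finset.sum_mul, hcol v]
      rw [← mul_assoc, mul_inv_cancel₀ (hdegR v).ne', one_mul]
    rw [hswap, hxsum t]
    have := hxsum t
    linarith [hxsum t]
  -- telescoping bound
  have hkey : ∑ t ∈ Finset.range T, ∑ u ∈ S t, r t u ≤ 1 := by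
    have htel : ∑ t ∈ Finset.range T, (α * ∑ u ∈ S t, r t u)
        = (∑ u, r 0 u) - ∑ u, r T u := by
      rw [← Finset.sum_range_sub' (fun t => ∑ u, r t u) T]
      exact Finset.sum_congr rfl fun t _ => by rw [hsum t]; ring
    have hf0 : ∑ u, r 0 u = α := by
      rw [hr0, he]
      simp [Pi.single_apply, Finset.sum_ite_eq']
    have hfT : 0 ≤ ∑ u, r T u := Finset.sum_nonneg fun u _ => hnonneg T u
    have hle : α * ∑ t ∈ Finset.range T, ∑ u ∈ S t, r t u ≤ α * 1 := by
      rw [hf0] at htel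
      rw [mul_one, Finset.mul_sum, htel]; linarith
    exact le_of_mul_le_mul_left hle hα
  -- per-step volume bound
  have hbound : ∀ t, ∑ u ∈ S t, (G.degree u : ℝ) ≤ (1/(ε*α)) * ∑ u ∈ S t, r t u := by
    intro t
    rw [Finset.mul_sum]
    refine Finset.sum_le_sum fun u hu => ?_
    have hmem : ε * α * (G.degree u : ℝ) ≤ r t u := by
      rw [hS t] at hu; exact (Finset.mem_filter.1 hu).2
    rw [one_div, ← div_eq_inv_mul, le_div_iff₀ hεα]
    linarith [hmem]
  calc ∑ t ∈ Finset.range T, ∑ u ∈ S t, (G.degree u : ℝ)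
      ≤ ∑ t ∈ Finset.range T, (1/(ε*α)) * ∑ u ∈ S t, r t u :=
        Finset.sum_le_sum fun t _ => hbound t
    _ = (1/(ε*α)) * ∑ t ∈ Finset.range T, ∑ u ∈ S t, r t u := by rw [Finset.mul_sum]
    _ ≤ (1/(ε*α)) * 1 := by
        apply mul_le_mul_of_nonneg_left hkey (by positivity)
    _ = 1/(ε*α) := mul_one _
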